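/- Let p be a prime number, let K be a commutative ring of characteristic p, and let g and h be multivariate polynomials over K in variables indexed by a set σ. Assume that every exponent vector α in the support of g has at least one component not divisible by p. Then for every α in the support of g, the coefficient of h^p + g at α equals the coefficient of g at α; in particular the support of g is contained in the support of h^p + g, so if g is nonzero then h^p + g is nonzero and the minimal total degree of a monomial of h^p + g is at most the minimal total degree of a monomial of g. -/

import Mathlib

open MvPolynomial

lemma pow_p_support_dvd {p : ℕ} (hp : p.Prime) {K : Type*} [CommRing K] [CharP K p]
    {σ : Type*} (h : MvPolynomial σ K) :
    ∀ α ∈ (h ^ p).support, ∀ s, p ∣ α s := by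
  haveI := Fact.mk hp
  classical
  induction h using MvPolynomial.induction_on' with
  | monomial d c =>
    intro α hα s
    rw [monomial_pow] at hα
    have := support_monomial_subset hα
    simp only [Finset.mem_singleton] at this
    subst this
    simp [Finsupp.smul_apply]
  | add f g hf hg =>
    intro α hα s
    rw [add_pow_char] at hα
    rcases Finset.mem_union.mp (MvPolynomial.support_add hα) with h' | h'
    · exact hf α h' s
    · exact hg α h' s

theorem no_cancellation_with_pth_power
    {p : ℕ} (hp : p.Prime) {K : Type*} [CommRing K] [CharP K p]
    {σ : Type*} (g h : MvPolynomial σ K)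
    (hg : ∀ α ∈ g.support, ∃ s, ¬ (p ∣ α s)) :
    (∀ α ∈ g.support, (h ^ p + g).coeff α = g.coeff α) ∧
    g.support ⊆ (h ^ p + g).support ∧
    (g ≠ 0 → (h ^ p + g ≠ 0 ∧
      sInf ((fun α : σ →₀ ℕ => α.sum fun _ e => e) ''
          ((h ^ p + g).support : Set (σ →₀ ℕ))) ≤
        sInf ((fun α : σ →₀ ℕ => α.sum fun _ e => e) '' (g.support : Set (σ →₀ ℕ))))) := by
  have key : ∀ α ∈ g.support, (h ^ p + g).coeff α = g.coeff α := by
    intro α hα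
    obtain ⟨s, hs⟩ := hg α hα
    have h0 : (h ^ p).coeff α = 0 := by
      by_contra hne
      exact hs (pow_p_support_dvd hp h α (mem_support_iff.mpr hne) s)
    rw [coeff_add, h0, zero_add]
  have hsub : g.support ⊆ (h ^ p + g).support := by
    intro α hα
    rw [mem_support_iff, key α hα]
    exact mem_support_iff.mp hα
  refine ⟨key, hsub, fun hg0 => ?_⟩
  have hne : (h ^ p + g) ≠ 0 := by
    intro h0
    obtain ⟨α, hα⟩ := (support_nonempty.mpr hg0)
    have := hsub hα
    rw [h0] at this
    simp at this
  refine ⟨hne, ?_⟩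
  have hne' : ((fun α : σ →₀ ℕ => α.sum fun _ e => e) ''
      (g.support : Set (σ →₀ ℕ))).Nonempty := by
    obtain ⟨α, hα⟩ := (support_nonempty.mpr hg0)
    exact ⟨_, ⟨α, hα, rfl⟩⟩
  obtain ⟨α, hα, hαe⟩ := Nat.sInf_mem hne'
  exact hαe ▸ Nat.sInf_le ⟨α, hsub hα, rfl⟩
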